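/- For d > α > 0 and 0 < β < d-α, define F(β) = 2^α · Γ((α+β)/2)·Γ((d-β)/2) / (Γ(β/2)·Γ((d-α-β)/2)), extended by F(0) = F(d-α) = 0. Then F attains its maximum on [0, d-α] uniquely at β_c = (d-α)/2, and F is strictly increasing on [0, β_c]. -/

import Mathlib

open Real Filter Set Finset Topology

lemma term_concave (a c : ℝ) (ha : 0 < a) (hc : 0 ≤ c) :
    StrictConcaveOn ℝ (Set.Ioi (0:ℝ)) (fun x => Real.log (x + c) - Real.log (x + a + c)) := by
  have hd : ∀ x ∈ Set.Ioi (0:ℝ),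
      deriv (fun x => Real.log (x + c) - Real.log (x + a + c)) x = 1/(x+c) - 1/(x+a+c) := by
    intro x hx
    have hx0 : (0:ℝ) < x := hx
    have h1 : HasDerivAt (fun x : ℝ => Real.log (x + c)) (1/(x+c)) x := by
      simpa using ((hasDerivAt_id x).add_const c).log (by positivity)
    have h2 : HasDerivAt (fun x : ℝ => Real.log (x + a + c)) (1/(x+a+c)) x := by
      simpa using (((hasDerivAt_id x).add_const a).add_const c).log (by positivity)
    exact (h1.sub h2).deriv
  apply StrictAntiOn.strictConcaveOn_of_deriv (convex_Ioi 0)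
  · apply ContinuousOn.sub
    · exact ContinuousOn.log (by fun_prop) (fun x hx => by have : (0:ℝ) < x := hx; positivity)
    · exact ContinuousOn.log (by fun_prop) (fun x hx => by have : (0:ℝ) < x := hx; positivity)
  · rw [interior_Ioi]
    intro x hx y hy hxy
    have hx0 : (0:ℝ) < x := hx
    have hy0 : (0:ℝ) < y := hy
    rw [hd x hx, hd y hy]
    have e : ∀ p : ℝ, 0 < p → 1/(p+c) - 1/(p+a+c) = a/((p+c)*(p+a+c)) := by
      intro p hp; field_simp; ring
    rw [e x hx0, e y hy0]
    apply div_lt_div_of_pos_left ha (by positivity)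
    nlinarith

lemma log_gammaSeq (s : ℝ) (hs : 0 < s) (n : ℕ) (hn : 1 ≤ n) :
    Real.log (Real.GammaSeq s n)
      = s * Real.log n + Real.log (n.factorial : ℝ) - ∑ j ∈ Finset.range (n+1), Real.log (s + j) := by
  have hn0 : (0:ℝ) < n := by exact_mod_cast hn
  have hprod : ∀ j ∈ Finset.range (n+1), s + (j:ℝ) ≠ 0 := by
    intro j _
    have : (0:ℝ) ≤ j := Nat.cast_nonneg j
    positivity
  rw [Real.GammaSeq, Real.log_div, Real.log_mul, Real.log_rpow hn0, Real.log_prod hprod]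
  · positivity
  · positivity
  · positivity
  · exact Finset.prod_ne_zero_iff.2 hprod

lemma concaveOn_sum' {ι : Type*} (t : Finset ι) (S : Set ℝ) (hS : Convex ℝ S) (f : ι → ℝ → ℝ)
    (h : ∀ i ∈ t, ConcaveOn ℝ S (f i)) :
    ConcaveOn ℝ S (fun x => ∑ i ∈ t, f i x) := by
  classical
  induction t using Finset.induction_on with
  | empty => simpa using concaveOn_const 0 hS
  | insert i t' hni ih =>
    simp only [Finset.sum_insert hni]
    exact (h i (Finset.mem_insert_self i t')).add
      (ih fun j hj => h j (Finset.mem_insert_of_mem hj))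

lemma concaveOn_of_tendsto {S : Set ℝ} (hS : Convex ℝ S) {f : ℕ → ℝ → ℝ} {g : ℝ → ℝ}
    (hf : ∀ n, ConcaveOn ℝ S (f n)) (hlim : ∀ x ∈ S, Tendsto (fun n => f n x) atTop (𝓝 (g x))) :
    ConcaveOn ℝ S g := by
  refine ⟨hS, fun x hx y hy p q hp hq hpq => ?_⟩
  have hmem : p • x + q • y ∈ S := hS hx hy hp hq hpq
  refine le_of_tendsto_of_tendsto'
    (((hlim x hx).const_smul p).add ((hlim y hy).const_smul q)) (hlim _ hmem) ?_
  exact fun n => (hf n).2 hx hy hp hq hpq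

lemma D_strictConcave (a : ℝ) (ha : 0 < a) :
    StrictConcaveOn ℝ (Set.Ioi (0:ℝ))
      (fun x => Real.log (Real.Gamma (x + a)) - Real.log (Real.Gamma x)) := by
  set q : ℕ → ℝ → ℝ := fun n x =>
    a * Real.log n + ∑ j ∈ Finset.range n, (Real.log (x + ((j:ℝ)+1)) - Real.log (x + a + ((j:ℝ)+1)))
    with hq_def
  -- step A
  have stepA : ∀ x : ℝ, 0 < x → ∀ n : ℕ, 1 ≤ n →
      Real.log (Real.GammaSeq (x+a) n) - Real.log (Real.GammaSeq x n)
        = q n x + (Real.log x - Real.log (x + a)) := by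
    intro x hx n hn
    rw [log_gammaSeq (x+a) (by positivity) n hn, log_gammaSeq x hx n hn]
    rw [hq_def]
    simp only []
    rw [Finset.sum_range_succ' (fun j => Real.log (x + a + (j:ℝ))),
        Finset.sum_range_succ' (fun j => Real.log (x + (j:ℝ)))]
    rw [Finset.sum_sub_distrib]
    push_cast
    set S1 := ∑ j ∈ Finset.range n, Real.log (x + a + ((j:ℝ) + 1)) with hS1
    set S2 := ∑ j ∈ Finset.range n, Real.log (x + ((j:ℝ) + 1)) with hS2
    ring_nf
  -- step B : limits
  have stepB : ∀ x ∈ Set.Ioi (0:ℝ), Tendsto (fun n => q n x) atTop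
      (𝓝 ((Real.log (Real.Gamma (x + a)) - Real.log (Real.Gamma x))
        - (Real.log x - Real.log (x + a)))) := by
    intro x hx
    have hx0 : (0:ℝ) < x := hx
    have h1 : Tendsto (fun n => Real.log (Real.GammaSeq (x+a) n) - Real.log (Real.GammaSeq x n)
        - (Real.log x - Real.log (x + a))) atTop
        (𝓝 ((Real.log (Real.Gamma (x + a)) - Real.log (Real.Gamma x))
          - (Real.log x - Real.log (x + a)))) := by
      exact (((Real.GammaSeq_tendsto_Gamma (x+a)).log
          (Real.Gamma_pos_of_pos (by positivity)).ne').sub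
        ((Real.GammaSeq_tendsto_Gamma x).log (Real.Gamma_pos_of_pos hx0).ne')).sub
          tendsto_const_nhds
    refine h1.congr' ?_
    filter_upwards [eventually_ge_atTop 1] with n hn
    rw [stepA x hx0 n hn]; ring
  -- step C : each q n is concave
  have stepC : ∀ n : ℕ, ConcaveOn ℝ (Set.Ioi (0:ℝ)) (q n) := by
    intro n
    rw [hq_def]
    exact (concaveOn_const _ (convex_Ioi 0)).add
      (concaveOn_sum' _ _ (convex_Ioi 0) _
        (fun j _ => (term_concave a ((j:ℝ)+1) ha (by positivity)).concaveOn))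
  have hR : ConcaveOn ℝ (Set.Ioi (0:ℝ))
      (fun x => (Real.log (Real.Gamma (x + a)) - Real.log (Real.Gamma x))
        - (Real.log x - Real.log (x + a))) :=
    concaveOn_of_tendsto (convex_Ioi 0) stepC stepB
  have := (term_concave a 0 ha le_rfl).add_concaveOn hR
  have he : ((fun x => Real.log (x + 0) - Real.log (x + a + 0)) + fun x =>
      (Real.log (Real.Gamma (x + a)) - Real.log (Real.Gamma x))
        - (Real.log x - Real.log (x + a)))
      = (fun x => Real.log (Real.Gamma (x + a)) - Real.log (Real.Gamma x)) := by
    funext x; simp only [Pi.add_apply, add_zero]; ring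
  rwa [he] at this

theorem F_max_at_center (d α : ℝ) (hα : 0 < α) (hd : α < d)
    (F : ℝ → ℝ)
    (hF : ∀ β ∈ Set.Ioo (0:ℝ) (d - α),
      F β = 2 ^ α * (Gamma ((α + β) / 2) * Gamma ((d - β) / 2)) /
        (Gamma (β / 2) * Gamma ((d - α - β) / 2)))
    (hF0 : F 0 = 0) (hFend : F (d - α) = 0) :
    StrictMonoOn F (Set.Icc (0:ℝ) ((d - α) / 2)) ∧
      ∀ β ∈ Set.Icc (0:ℝ) (d - α), β ≠ (d - α) / 2 → F β < F ((d - α) / 2) := by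
  set s := d - α with hs_def
  have hs : 0 < s := by rw [hs_def]; linarith
  have ha2 : 0 < α/2 := by linarith
  set D : ℝ → ℝ := fun x => Real.log (Real.Gamma (x + α/2)) - Real.log (Real.Gamma x)
    with hD_def
  have hD : StrictConcaveOn ℝ (Set.Ioi (0:ℝ)) D := by
    rw [hD_def]; exact D_strictConcave _ ha2
  -- key representation
  have key : ∀ β ∈ Set.Ioo (0:ℝ) s,
      F β = Real.exp (α * Real.log 2 + (D (β/2) + D ((s-β)/2))) := by
    intro β hβ
    obtain ⟨hβ0, hβs⟩ := hβ
    have h1 : 0 < β/2 := by linarith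
    have h2 : 0 < (s-β)/2 := by linarith
    have h3 : 0 < β/2 + α/2 := by linarith
    have h4 : 0 < (s-β)/2 + α/2 := by linarith
    have e1 : (α + β)/2 = β/2 + α/2 := by ring
    have e2 : (d - β)/2 = (s-β)/2 + α/2 := by rw [hs_def]; ring
    rw [hF β ⟨hβ0, hβs⟩, hD_def]
    simp only []
    rw [Real.exp_add, Real.exp_add, Real.exp_sub, Real.exp_sub,
        Real.exp_log (Real.Gamma_pos_of_pos h3), Real.exp_log (Real.Gamma_pos_of_pos h1),
        Real.exp_log (Real.Gamma_pos_of_pos h4), Real.exp_log (Real.Gamma_pos_of_pos h2),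
        Real.rpow_def_of_pos (by norm_num : (0:ℝ) < 2), mul_comm (Real.log 2) α,
        e1, e2]
    have g1 := (Real.Gamma_pos_of_pos h1).ne'
    have g2 := (Real.Gamma_pos_of_pos h2).ne'
    field_simp
  -- the pair inequality from strict concavity
  have pair : ∀ x1 x2 m : ℝ, 0 < x1 → x1 < x2 → x2 + x2 ≤ m →
      D x1 + D (m - x1) < D x2 + D (m - x2) := by
    intro x1 x2 m h0 h12 h2m
    have hx2 : 0 < x2 := h0.trans h12
    have hmx2 : 0 < m - x2 := by linarith
    have hmx1 : 0 < m - x1 := by linarith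
    have hden : 0 < m - 2*x1 := by linarith
    set t := (m - x1 - x2)/(m - 2*x1) with ht_def
    have ht0 : 0 < t := by
      apply div_pos _ hden; linarith
    have ht1 : 0 < 1 - t := by
      rw [ht_def, sub_pos, div_lt_one hden]; linarith
    have hne : x1 ≠ m - x1 := by intro h; linarith
    have hA := hD.2 (show x1 ∈ Set.Ioi (0:ℝ) from h0)
      (show m - x1 ∈ Set.Ioi (0:ℝ) from hmx1) hne ht0 ht1 (by ring)
    have hB := hD.2 (show x1 ∈ Set.Ioi (0:ℝ) from h0)
      (show m - x1 ∈ Set.Ioi (0:ℝ) from hmx1) hne ht1 ht0 (by ring)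
    rw [smul_eq_mul, smul_eq_mul, smul_eq_mul, smul_eq_mul] at hA hB
    have eA : t * x1 + (1 - t) * (m - x1) = x2 := by
      have htm : t * (m - 2*x1) = m - x1 - x2 := by rw [ht_def]; exact div_mul_cancel₀ _ hden.ne'
      linear_combination -htm
    have eB : (1 - t) * x1 + t * (m - x1) = m - x2 := by
      have htm : t * (m - 2*x1) = m - x1 - x2 := by rw [ht_def]; exact div_mul_cancel₀ _ hden.ne'
      linear_combination htm
    rw [eA] at hA; rw [eB] at hB
    linarith
  have hmono : StrictMonoOn F (Set.Icc (0:ℝ) (s/2)) := by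
    intro β1 hβ1 β2 hβ2 hlt
    have hβ2pos : 0 < β2 := lt_of_le_of_lt hβ1.1 hlt
    have hβ2s : β2 < s := lt_of_le_of_lt hβ2.2 (by linarith)
    have hkey2 := key β2 ⟨hβ2pos, hβ2s⟩
    rcases eq_or_lt_of_le hβ1.1 with h0 | h0
    · rw [← h0, hF0, hkey2]; exact Real.exp_pos _
    · rw [key β1 ⟨h0, by linarith⟩, hkey2]
      apply Real.exp_lt_exp.2
      apply (add_lt_add_iff_left _).2
      have hp := pair (β1/2) (β2/2) (s/2) (by linarith) (by linarith)
        (by linarith [hβ2.2])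
      have e1 : s/2 - β1/2 = (s - β1)/2 := by ring
      have e2 : s/2 - β2/2 = (s - β2)/2 := by ring
      rwa [e1, e2] at hp
  refine ⟨hmono, ?_⟩
  intro β hβ hne
  have hc_mem : s/2 ∈ Set.Icc (0:ℝ) (s/2) := ⟨by linarith, le_refl _⟩
  rcases lt_trichotomy β (s/2) with hltc | heq | hgtc
  · exact hmono ⟨hβ.1, hltc.le⟩ hc_mem hltc
  · exact absurd heq hne
  · rcases eq_or_lt_of_le hβ.2 with hβs | hβs
    · rw [hβs, hFend, key (s/2) ⟨by linarith, by linarith⟩]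
      exact Real.exp_pos _
    · have hsym : F β = F (s - β) := by
        rw [key β ⟨by linarith, hβs⟩, key (s - β) ⟨by linarith, by linarith⟩]
        have e : s - (s - β) = β := by ring
        rw [e]
        congr 1
        ring
      rw [hsym]
      exact hmono ⟨by linarith, by linarith⟩ hc_mem (by linarith)
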